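/- If β is the real root of X^3 - X^2 - X - 1 and α is a complex root of the same polynomial with α ≠ β, then |α| < 1. -/

import Mathlib

theorem tribonacci_pisot (β : ℝ) (hβ : β ^ 3 - β ^ 2 - β - 1 = 0)
    (α : ℂ) (hα : α ^ 3 - α ^ 2 - α - 1 = 0) (hne : α ≠ (β : ℂ)) :
    ‖α‖ < 1 := by
  -- β > 5/3
  have hβ53 : 5 < 3 * β := by
    nlinarith [sq_nonneg (β + 1), sq_nonneg (β - 1), sq_nonneg β, sq_nonneg (3*β - 5)]
  have hβ1 : 1 < β := by linarith
  have hβc : ((β : ℂ)) ^ 3 - (β:ℂ) ^ 2 - β - 1 = 0 := by exact_mod_cast congrArg (Complex.ofReal) hβ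
  -- quadratic factor
  have hq : α ^ 2 + α * β + (β:ℂ) ^ 2 - α - β - 1 = 0 := by
    have h : (α - β) * (α ^ 2 + α * β + (β:ℂ) ^ 2 - α - β - 1) = 0 := by
      linear_combination hα - hβc
    rcases mul_eq_zero.1 h with h1 | h2
    · exact absurd (sub_eq_zero.1 h1) hne
    · exact h2
  set c := (starRingEnd ℂ) α with hc
  have hq' : c ^ 2 + c * β + (β:ℂ) ^ 2 - c - β - 1 = 0 := by
    have := congrArg (starRingEnd ℂ) hq
    simpa [map_pow, map_mul, map_sub, map_add] using this
  by_cases him : α.im = 0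
  · -- α is real: contradiction
    exfalso
    have hre : α = (α.re : ℂ) := by
      rw [Complex.ext_iff]; simp [him]
    set r := α.re
    have hqr : r ^ 2 + r * β + β ^ 2 - r - β - 1 = 0 := by
      have := hq
      rw [hre] at this
      exact_mod_cast this
    nlinarith [sq_nonneg (2 * r + β - 1)]
  · -- α nonreal
    have hd : α - c ≠ 0 := by
      intro h
      apply him
      have hcc : c = α := (sub_eq_zero.1 h).symm
      have := Complex.conj_eq_iff_im.1 hcc
      exact this
    have hsum : α + c + β - 1 = 0 := by
      have h : (α - c) * (α + c + β - 1) = 0 := by linear_combination hq - hq'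
      rcases mul_eq_zero.1 h with h1 | h2
      · exact absurd h1 hd
      · exact h2
    have hmul : α * c = (β:ℂ) ^ 2 - β - 1 := by
      have hc2 : c = 1 - β - α := by linear_combination hsum
      rw [hc2]
      linear_combination -hq
    have hns : Complex.normSq α = β ^ 2 - β - 1 := by
      have h1 : ((Complex.normSq α : ℝ) : ℂ) = ((β ^ 2 - β - 1 : ℝ) : ℂ) := by
        push_cast
        rw [← Complex.mul_conj]
        exact hmul
      exact_mod_cast h1
    have habs : ‖α‖ ^ 2 = β ^ 2 - β - 1 := by
      rw [Complex.sq_norm, hns]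
    nlinarith [norm_nonneg α, habs, hβ1, hβ]
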